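/- For every p > 1, the generalized hyperbolic sine function sinh_p is differentiable at every point x > 0, with derivative sinh_p'(x) = cosh_p(x) = (1 + sinh_p(x)^p)^(1/p); consequently |cosh_p(x)|^p − |sinh_p(x)|^p = 1 for all x ≥ 0. -/

import Mathlib

open Real Set Filter Topology

/-- Generalized inverse sine: `arcsinp p x = ∫₀ˣ (1 - tᵖ)^(-1/p) dt`. -/
noncomputable def arcsinp (p x : ℝ) : ℝ := ∫ t in (0:ℝ)..x, (1 - t ^ p) ^ (-(1/p))

/-- The generalized half-pi: `π_p/2 = arcsin_p 1`. -/
noncomputable def pipHalf (p : ℝ) : ℝ := arcsinp p 1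

/-- Generalized sine: the inverse of `arcsinp p` viewed as a map on `[0,1]`. -/
noncomputable def sinp (p : ℝ) : ℝ → ℝ := Function.invFunOn (arcsinp p) (Set.Icc 0 1)

/-- Generalized cosine. -/
noncomputable def cosp (p x : ℝ) : ℝ := (1 - (sinp p x) ^ p) ^ (1/p : ℝ)

/-- Generalized tangent. -/
noncomputable def tanp (p x : ℝ) : ℝ := sinp p x / cosp p x

/-- Generalized inverse hyperbolic sine: `arsinhp p x = ∫₀ˣ (1 + tᵖ)^(-1/p) dt`. -/
noncomputable def arsinhp (p x : ℝ) : ℝ := ∫ t in (0:ℝ)..x, (1 + t ^ p) ^ (-(1/p))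

/-- Generalized hyperbolic sine: the inverse of `arsinhp p` viewed as a map on `[0,∞)`. -/
noncomputable def sinhp (p : ℝ) : ℝ → ℝ := Function.invFunOn (arsinhp p) (Set.Ici 0)

/-- Generalized hyperbolic cosine. -/
noncomputable def coshp (p x : ℝ) : ℝ := (1 + (sinhp p x) ^ p) ^ (1/p : ℝ)

/-- Generalized hyperbolic tangent. -/
noncomputable def tanhp (p x : ℝ) : ℝ := sinhp p x / coshp p x


open Real Set Filter Topology MeasureTheory intervalIntegral NNReal

section auxlem

variable {p : ℝ}

lemma aux_base_pos (hp : 1 < p) {t : ℝ} (ht : 0 ≤ t) : 0 < 1 + t ^ p := by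
  have : (0:ℝ) ≤ t ^ p := Real.rpow_nonneg ht p
  linarith

lemma aux_contOn (hp : 1 < p) :
    ContinuousOn (fun t : ℝ => (1 + t ^ p) ^ (-(1/p))) (Ici 0) := by
  intro t ht
  have h1 : ContinuousAt (fun t : ℝ => 1 + t ^ p) t :=
    continuousAt_const.add (Real.continuousAt_rpow_const t p (Or.inr (by linarith)))
  have h2 : (1:ℝ) + t ^ p ≠ 0 := (aux_base_pos hp ht).ne'
  exact (h1.rpow_const (Or.inl h2)).continuousWithinAt

lemma aux_intble (hp : 1 < p) {a b : ℝ} (ha : 0 ≤ a) (hb : 0 ≤ b) :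
    IntervalIntegrable (fun t : ℝ => (1 + t ^ p) ^ (-(1/p))) volume a b := by
  apply ContinuousOn.intervalIntegrable
  apply (aux_contOn hp).mono
  intro t ht
  rcases le_total a b with h | h
  · rw [uIcc_of_le h] at ht; exact le_trans ha ht.1
  · rw [uIcc_of_ge h] at ht; exact le_trans hb ht.1

lemma arsinhp_zero : arsinhp p 0 = 0 := intervalIntegral.integral_same

lemma arsinhp_strictMonoOn (hp : 1 < p) : StrictMonoOn (arsinhp p) (Ici 0) := by
  intro a ha b hb hab
  have hkey : arsinhp p a + ∫ t in a..b, (1 + t ^ p) ^ (-(1/p)) = arsinhp p b :=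
    intervalIntegral.integral_add_adjacent_intervals
      (aux_intble hp le_rfl ha) (aux_intble hp ha (le_trans ha hab.le))
  have hpos : 0 < ∫ t in a..b, (1 + t ^ p) ^ (-(1/p)) := by
    apply intervalIntegral.intervalIntegral_pos_of_pos_on
      (aux_intble hp ha (le_trans ha hab.le))
    · intro t ht
      exact Real.rpow_pos_of_pos (aux_base_pos hp (le_trans ha ht.1.le)) _
    · exact hab
  linarith

lemma arsinhp_contOn (hp : 1 < p) : ContinuousOn (arsinhp p) (Ici 0) := by
  intro x hx
  have hx1 : (0:ℝ) ≤ x + 1 := by simp at hx; linarith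
  have hIcc : uIcc (0:ℝ) (x+1) = Icc 0 (x+1) := uIcc_of_le hx1
  have hint : IntegrableOn (fun t : ℝ => (1 + t ^ p) ^ (-(1/p))) (uIcc 0 (x+1)) volume := by
    rw [hIcc]
    exact ((aux_contOn hp).mono Icc_subset_Ici_self).integrableOn_Icc
  have hco : ContinuousOn (arsinhp p) (uIcc 0 (x+1)) :=
    intervalIntegral.continuousOn_primitive_interval hint
  have hxx : x < x + 1 := by linarith
  have hmem : uIcc (0:ℝ) (x+1) ∈ 𝓝[Ici 0] x := by
    rw [hIcc, ← Ici_inter_Iic]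
    exact Filter.inter_mem self_mem_nhdsWithin
      (mem_nhdsWithin_of_mem_nhds (Iic_mem_nhds hxx))
  exact (hco x (by rw [hIcc]; exact ⟨hx, hxx.le⟩)).mono_of_mem_nhdsWithin hmem

lemma aux_one_add_rpow_le (hp : 1 < p) {t : ℝ} (ht : 0 ≤ t) :
    1 + t ^ p ≤ (1 + t) ^ p := by
  have := NNReal.add_rpow_le_rpow_add (1 : ℝ≥0) (⟨t, ht⟩ : ℝ≥0) hp.le
  have h := (NNReal.coe_le_coe).2 this
  push_cast at h
  change (1:ℝ) ^ p + t ^ p ≤ (1 + t) ^ p at h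
  simpa using h

lemma aux_integrand_ge (hp : 1 < p) {t : ℝ} (ht : 0 ≤ t) :
    (1 + t)⁻¹ ≤ (1 + t ^ p) ^ (-(1/p)) := by
  have hp0 : (0:ℝ) < p := by linarith
  have h1 : ((1 + t) ^ p) ^ (-(1/p)) ≤ (1 + t ^ p) ^ (-(1/p)) :=
    Real.rpow_le_rpow_of_nonpos (aux_base_pos hp ht) (aux_one_add_rpow_le hp ht)
      (neg_nonpos.mpr (by positivity))
  have h2 : ((1 + t) ^ p) ^ (-(1/p)) = (1 + t)⁻¹ := by
    rw [← Real.rpow_mul (by linarith)]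
    rw [show p * (-(1/p)) = -1 by field_simp]
    rw [Real.rpow_neg_one]
  linarith [h1, h2.ge, h2.le]

lemma arsinhp_surjOn (hp : 1 < p) {y : ℝ} (hy : 0 ≤ y) :
    ∃ s ∈ Ici (0:ℝ), arsinhp p s = y := by
  set X := Real.exp y with hX
  have hX0 : 0 < X := Real.exp_pos y
  have hlow : Real.log (1 + X) ≤ arsinhp p X := by
    have h1 : (∫ t in (0:ℝ)..X, (1 + t)⁻¹) ≤ arsinhp p X := by
      apply intervalIntegral.integral_mono_on hX0.le _ (aux_intble hp le_rfl hX0.le)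
      · intro t ht
        exact aux_integrand_ge hp ht.1
      · apply ContinuousOn.intervalIntegrable
        intro t ht
        rw [uIcc_of_le hX0.le] at ht
        exact (continuousAt_const.add continuousAt_id).inv₀
          (ne_of_gt (by have := ht.1; show (0:ℝ) < 1 + t; linarith)) |>.continuousWithinAt
    have h2 : (∫ t in (0:ℝ)..X, (1 + t)⁻¹) = Real.log (1 + X) := by
      have h3 : (∫ t in (0:ℝ)..X, ((fun u : ℝ => u⁻¹) (t + 1))) =
          ∫ u in (0+1:ℝ)..(X+1), u⁻¹ := intervalIntegral.integral_comp_add_right _ 1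
      simp only [add_comm] at h3 ⊢
      rw [h3]
      rw [integral_inv (by rw [uIcc_of_le (by linarith)]; intro h; exact absurd h.1 (by norm_num))]
      norm_num
    linarith
  have hyX : y ≤ arsinhp p X := by
    have : Real.log X ≤ Real.log (1 + X) := Real.log_le_log hX0 (by linarith)
    rw [hX, Real.log_exp] at this
    linarith
  have hIVT := intermediate_value_Icc hX0.le ((arsinhp_contOn hp).mono Icc_subset_Ici_self)
  have hymem : y ∈ Icc (arsinhp p 0) (arsinhp p X) := by
    rw [arsinhp_zero]; exact ⟨hy, hyX⟩
  obtain ⟨s, hs, hfs⟩ := hIVT hymem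
  exact ⟨s, hs.1, hfs⟩

end auxlem

section mainlem

variable {p : ℝ}

lemma sinhp_mem (hp : 1 < p) {y : ℝ} (hy : 0 ≤ y) : sinhp p y ∈ Ici (0:ℝ) :=
  Function.invFunOn_mem (arsinhp_surjOn hp hy)

lemma sinhp_right_inv (hp : 1 < p) {y : ℝ} (hy : 0 ≤ y) : arsinhp p (sinhp p y) = y :=
  Function.invFunOn_eq (arsinhp_surjOn hp hy)

lemma sinhp_left_inv (hp : 1 < p) {s : ℝ} (hs : s ∈ Ici (0:ℝ)) :
    sinhp p (arsinhp p s) = s :=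
  ((arsinhp_strictMonoOn hp).injOn) (Function.invFunOn_apply_mem hs) hs
    (Function.invFunOn_apply_eq hs)

lemma arsinhp_nonneg (hp : 1 < p) {s : ℝ} (hs : 0 ≤ s) : 0 ≤ arsinhp p s := by
  rcases eq_or_lt_of_le hs with h | h
  · rw [← h, arsinhp_zero]
  · have := arsinhp_strictMonoOn hp self_mem_Ici (mem_Ici.mpr h.le) h
    rw [arsinhp_zero] at this
    exact this.le

lemma sinhp_contOn (hp : 1 < p) : ContinuousOn (sinhp p) (Ici 0) := by
  have hmono : StrictMono
      (fun s : Ici (0:ℝ) => (⟨arsinhp p s, arsinhp_nonneg hp s.2⟩ : Ici (0:ℝ))) := by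
    intro a b hab
    show arsinhp p (a:ℝ) < arsinhp p (b:ℝ)
    exact arsinhp_strictMonoOn hp a.2 b.2 (Subtype.coe_lt_coe.mpr hab)
  have hsurj : Function.Surjective
      (fun s : Ici (0:ℝ) => (⟨arsinhp p s, arsinhp_nonneg hp s.2⟩ : Ici (0:ℝ))) := by
    intro y
    obtain ⟨s, hs, hfs⟩ := arsinhp_surjOn hp y.2
    exact ⟨⟨s, hs⟩, Subtype.ext hfs⟩
  set e := StrictMono.orderIsoOfSurjective _ hmono hsurj with he
  have hagree : ∀ y : Ici (0:ℝ), sinhp p y = ((e.symm y : Ici (0:ℝ)) : ℝ) := by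
    intro y
    have h1 : arsinhp p ((e.symm y : Ici (0:ℝ)) : ℝ) = (y : ℝ) :=
      congrArg Subtype.val (e.apply_symm_apply y)
    calc sinhp p (y:ℝ) = sinhp p (arsinhp p ((e.symm y : Ici (0:ℝ)) : ℝ)) := by rw [h1]
    _ = ((e.symm y : Ici (0:ℝ)) : ℝ) := sinhp_left_inv hp (e.symm y).2
  rw [continuousOn_iff_continuous_restrict]
  have hres : restrict (Ici 0) (sinhp p) = fun y => ((e.symm y : Ici (0:ℝ)) : ℝ) :=
    funext fun y => hagree y
  rw [show (Ici 0).domRestrict (sinhp p) = restrict (Ici 0) (sinhp p) from rfl, hres]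
  exact continuous_subtype_val.comp e.symm.continuous

lemma sinhp_hasDerivAt (hp : 1 < p) {x : ℝ} (hx : 0 < x) :
    HasDerivAt (sinhp p) ((1 + (sinhp p x) ^ p) ^ ((1:ℝ)/p)) x := by
  set s := sinhp p x with hs
  have hs0 : (0:ℝ) ≤ s := sinhp_mem hp hx.le
  have hfs : arsinhp p s = x := sinhp_right_inv hp hx.le
  have hspos : 0 < s := by
    rcases eq_or_lt_of_le hs0 with h | h
    · exfalso
      rw [← h, arsinhp_zero] at hfs
      linarith
    · exact h
  have hbpos : 0 < 1 + s ^ p := aux_base_pos hp hs0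
  have hcg : ContinuousAt (fun t : ℝ => (1 + t ^ p) ^ (-(1/p))) s :=
    ((aux_contOn hp).mono Ioi_subset_Ici_self).continuousAt (Ioi_mem_nhds hspos)
  have hmeas : StronglyMeasurableAtFilter
      (fun t : ℝ => (1 + t ^ p) ^ (-(1/p))) (𝓝 s) volume :=
    ContinuousOn.stronglyMeasurableAtFilter isOpen_Ioi
      ((aux_contOn hp).mono Ioi_subset_Ici_self) s hspos
  have hf : HasDerivAt (arsinhp p) ((1 + s ^ p) ^ (-(1/p))) s :=
    intervalIntegral.integral_hasDerivAt_right (aux_intble hp le_rfl hs0) hmeas hcg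
  have hf' : (1 + s ^ p) ^ (-(1/p)) ≠ 0 := (Real.rpow_pos_of_pos hbpos _).ne'
  have hcont : ContinuousAt (sinhp p) x := (sinhp_contOn hp).continuousAt (Ici_mem_nhds hx)
  have hfg : ∀ᶠ y in 𝓝 x, arsinhp p (sinhp p y) = y :=
    Filter.eventually_of_mem (Ioi_mem_nhds hx) fun y hy => sinhp_right_inv hp (le_of_lt hy)
  have hd := HasDerivAt.of_local_left_inverse hcont hf hf' hfg
  have hinv : ((1 + s ^ p) ^ (-(1/p)))⁻¹ = (1 + s ^ p) ^ ((1:ℝ)/p) := by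
    rw [Real.rpow_neg hbpos.le, inv_inv]
  rwa [hinv] at hd

end mainlem

theorem stmt_19 (p : ℝ) (hp : 1 < p) :
    (∀ x : ℝ, 0 < x →
      HasDerivAt (sinhp p) (coshp p x) x ∧ coshp p x = (1 + sinhp p x ^ p) ^ (1/p : ℝ)) ∧
    (∀ x : ℝ, 0 ≤ x → |coshp p x| ^ p - |sinhp p x| ^ p = 1) := by
  constructor
  · intro x hx
    exact ⟨sinhp_hasDerivAt hp hx, rfl⟩
  · intro x hx
    have hs0 : 0 ≤ sinhp p x := sinhp_mem hp hx
    have hbpos : 0 < 1 + (sinhp p x) ^ p := aux_base_pos hp hs0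
    have hcosh : 0 ≤ coshp p x := Real.rpow_nonneg hbpos.le _
    rw [abs_of_nonneg hcosh, abs_of_nonneg hs0]
    have h1 : (coshp p x) ^ p = 1 + (sinhp p x) ^ p := by
      unfold coshp
      rw [← Real.rpow_mul hbpos.le]
      rw [show (1/p) * p = 1 by field_simp]
      rw [Real.rpow_one]
    rw [h1]
    ring
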